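/- For finite nonnegative measures μ ≪ ν on a compact metric space X, the relative entropy satisfies the dual (variational) formula Ent(μ|ν) = sup over continuous functions φ on X of ∫ φ dμ − ∫ (e^φ − 1) dν. -/

import Mathlib

open MeasureTheory
open scoped ENNReal

/-- Relative entropy `Ent(μ|ν) = ∫ (f log f − f + 1) dν` for `f = dμ/dν`. -/
noncomputable def relEntropy {α : Type*} [MeasurableSpace α] (μ ν : Measure α) : ℝ≥0∞ :=
  ∫⁻ x, ENNReal.ofReal ((μ.rnDeriv ν x).toReal * Real.log ((μ.rnDeriv ν x).toReal)
      - (μ.rnDeriv ν x).toReal + 1) ∂ν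

/-- dual (variational) formula for the relative entropy on a compact
metric space: `Ent(μ|ν) = sup_{φ ∈ C(X)} ∫ φ dμ − ∫ (e^φ − 1) dν`. -/

lemma my_young {s t : ℝ} (ht : 0 ≤ t) :
    t * s - (Real.exp s - 1) ≤ t * Real.log t - t + 1 := by
  rcases eq_or_lt_of_le ht with h | h
  · simp only [← h, Real.log_zero, zero_mul, mul_zero]
    nlinarith [Real.exp_pos s]
  · have h1 := Real.add_one_le_exp (s - Real.log t)
    rw [Real.exp_sub, Real.exp_log h] at h1
    have h2 : (s - Real.log t + 1) * t ≤ Real.exp s := (le_div_iff₀ h).mp (by linarith)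
    nlinarith

lemma my_F_le_F {t a b : ℝ} (ht : 0 ≤ t) (hab : a ≤ b) (hb : Real.exp b ≤ t) :
    t * a - (Real.exp a - 1) ≤ t * b - (Real.exp b - 1) := by
  have h1 := Real.add_one_le_exp (a - b)
  rw [Real.exp_sub] at h1
  have h2 : (a - b + 1) * Real.exp b ≤ Real.exp a :=
    (le_div_iff₀ (Real.exp_pos b)).mp (by linarith)
  nlinarith [Real.exp_pos b, mul_le_mul_of_nonneg_left hb (sub_nonneg.mpr hab)]

lemma my_F_le_F' {t a b : ℝ} (hab : b ≤ a) (hb : t ≤ Real.exp b) :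
    t * a - (Real.exp a - 1) ≤ t * b - (Real.exp b - 1) := by
  have h1 := Real.add_one_le_exp (a - b)
  rw [Real.exp_sub] at h1
  have h2 : (a - b + 1) * Real.exp b ≤ Real.exp a :=
    (le_div_iff₀ (Real.exp_pos b)).mp (by linarith)
  nlinarith [Real.exp_pos b, mul_le_mul_of_nonneg_left hb (sub_nonneg.mpr hab)]

lemma my_exp_lip {a b C : ℝ} (ha : a ≤ C) (hb : b ≤ C) :
    |Real.exp a - Real.exp b| ≤ Real.exp C * |a - b| := by
  have key : ∀ u v : ℝ, u ≤ C → v ≤ u → Real.exp u - Real.exp v ≤ Real.exp C * (u - v) := by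
    intro u v hu hv
    have h1 := Real.add_one_le_exp (v - u)
    rw [Real.exp_sub] at h1
    have h2 : (v - u + 1) * Real.exp u ≤ Real.exp v :=
      (le_div_iff₀ (Real.exp_pos u)).mp (by linarith)
    nlinarith [Real.exp_pos u, Real.exp_le_exp.mpr hu, sub_nonneg.mpr hv]
  rcases le_total b a with h | h
  · rw [abs_of_nonneg (by linarith [Real.exp_le_exp.mpr h] : (0:ℝ) ≤ Real.exp a - Real.exp b),
      abs_of_nonneg (sub_nonneg.mpr h)]
    exact key a b ha h
  · rw [abs_of_nonpos (by linarith [Real.exp_le_exp.mpr h] : Real.exp a - Real.exp b ≤ 0),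
      abs_of_nonpos (sub_nonpos.mpr h)]
    have := key b a hb h
    linarith

lemma my_bdd_integrable {X : Type*} [MeasurableSpace X] {ν : Measure X} [IsFiniteMeasure ν]
    {h : X → ℝ} (hm : AEStronglyMeasurable h ν) {B : ℝ} (hb : ∀ x, |h x| ≤ B) :
    Integrable h ν :=
  Integrable.mono' (integrable_const B) hm (ae_of_all _ fun x => by
    simpa [Real.norm_eq_abs] using hb x)

lemma my_stepA {X : Type*} [MetricSpace X] [CompactSpace X]
    [MeasurableSpace X] [BorelSpace X]
    (μ ν : Measure X) [IsFiniteMeasure μ] [IsFiniteMeasure ν] (hac : μ ≪ ν)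
    (φ : X → ℝ) (hφc : Continuous φ) {C : ℝ} (hC : ∀ x, |φ x| ≤ C) :
    ENNReal.ofReal ((∫ x, φ x ∂μ) - ∫ x, (Real.exp (φ x) - 1) ∂ν) ≤ relEntropy μ ν := by
  set f : X → ℝ := fun x => (μ.rnDeriv ν x).toReal with hf
  have hfm : Measurable f := (Measure.measurable_rnDeriv μ ν).ennreal_toReal
  have hfnn : ∀ x, 0 ≤ f x := fun x => ENNReal.toReal_nonneg
  have hfint : Integrable f ν := Measure.integrable_toReal_rnDeriv
  have h1 : Integrable (fun x => φ x * f x) ν :=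
    hfint.bdd_mul (hφc.aestronglyMeasurable) (ae_of_all _ fun x => by simpa [Real.norm_eq_abs] using hC x)
  have h2 : Integrable (fun x => Real.exp (φ x) - 1) ν :=
    my_bdd_integrable ((hφc.rexp.sub continuous_const).aestronglyMeasurable)
      (B := Real.exp C + 1) (fun x => by
        have := hC x
        rw [abs_le] at this ⊢
        constructor
        · nlinarith [Real.exp_pos (φ x), Real.exp_pos C]
        · nlinarith [Real.exp_le_exp.mpr this.2])
  have hμφ : ∫ x, φ x ∂μ = ∫ x, f x * φ x ∂ν := by
    rw [← integral_rnDeriv_smul hac]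
    simp [hf, smul_eq_mul]
  set ψ : X → ℝ := fun x => f x * φ x - (Real.exp (φ x) - 1) with hψ
  have h1' : Integrable (fun x => f x * φ x) ν := by
    simpa [mul_comm] using h1
  have hψint : Integrable ψ ν := h1'.sub h2
  have step1 : (∫ x, φ x ∂μ) - ∫ x, (Real.exp (φ x) - 1) ∂ν = ∫ x, ψ x ∂ν := by
    rw [hμφ, ← integral_sub h1' h2]
  rw [step1, relEntropy]
  calc ENNReal.ofReal (∫ x, ψ x ∂ν)
      ≤ ENNReal.ofReal (∫ x, max (ψ x) 0 ∂ν) := by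
        apply ENNReal.ofReal_le_ofReal
        exact integral_mono hψint (hψint.sup (integrable_zero _ _ _)) (fun x => le_max_left _ _)
    _ = ∫⁻ x, ENNReal.ofReal (max (ψ x) 0) ∂ν :=
        ofReal_integral_eq_lintegral_ofReal (hψint.sup (integrable_zero _ _ _))
          (ae_of_all _ fun x => le_max_right _ _)
    _ ≤ ∫⁻ x, ENNReal.ofReal (f x * Real.log (f x) - f x + 1) ∂ν := by
        apply lintegral_mono
        intro x
        apply ENNReal.ofReal_le_ofReal
        rcases max_cases (ψ x) 0 with ⟨he, _⟩ | ⟨he, _⟩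
        · rw [he]
          exact my_young (hfnn x)
        · rw [he]
          have h0 := my_young (s := 0) (hfnn x)
          simp only [mul_zero, Real.exp_zero] at h0
          linarith

lemma my_approx {X : Type*} [MetricSpace X] [CompactSpace X]
    [MeasurableSpace X] [BorelSpace X]
    (μ ν : Measure X) [IsFiniteMeasure μ] [IsFiniteMeasure ν]
    (φ : X → ℝ) (hφm : Measurable φ) {C : ℝ} (hC0 : 0 ≤ C) (hC : ∀ x, |φ x| ≤ C) :
    ENNReal.ofReal ((∫ x, φ x ∂μ) - ∫ x, (Real.exp (φ x) - 1) ∂ν)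
      ≤ ⨆ ψ : C(X, ℝ), ENNReal.ofReal ((∫ x, ψ x ∂μ) - ∫ x, (Real.exp (ψ x) - 1) ∂ν) := by
  set A : ℝ := (∫ x, φ x ∂μ) - ∫ x, (Real.exp (φ x) - 1) ∂ν with hA
  have key : ∀ ε : ℝ, 0 < ε → ∃ ψ : C(X, ℝ),
      A - ε ≤ (∫ x, ψ x ∂μ) - ∫ x, (Real.exp (ψ x) - 1) ∂ν := by
    intro ε hε
    set ρ : Measure X := μ + ν with hρ
    have : IsFiniteMeasure ρ := by rw [hρ]; infer_instance
    set δ : ℝ := ε / (1 + Real.exp C) with hδ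
    have hδpos : 0 < δ := div_pos hε (by positivity)
    have hφρ : Integrable φ ρ := my_bdd_integrable hφm.aestronglyMeasurable hC
    obtain ⟨g, hg, hgint⟩ := hφρ.exists_boundedContinuous_integral_sub_le hδpos
    set ψc : X → ℝ := fun x => max (-C) (min C (g x)) with hψc
    have hψcont : Continuous ψc :=
      continuous_const.max (continuous_const.min g.continuous)
    set ψ : C(X, ℝ) := ⟨ψc, hψcont⟩ with hψdef
    have hψb : ∀ x, |ψc x| ≤ C := by
      intro x
      rw [abs_le]
      constructor
      · exact le_max_left _ _
      · exact max_le (by linarith) (min_le_left _ _)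
    have hpt : ∀ x, |ψc x - φ x| ≤ ‖φ x - g x‖ := by
      intro x
      have hx := hC x
      rw [abs_le] at hx
      rw [Real.norm_eq_abs, abs_sub_comm (φ x) (g x)]
      rcases le_total (g x) (-C) with h | h
      · have : ψc x = -C := by
          rw [hψc]
          simp only
          rw [min_eq_right (by linarith), max_eq_left h]
        rw [this, abs_of_nonpos (by linarith), abs_of_nonpos (by linarith)]
        linarith
      · rcases le_total C (g x) with h' | h'
        · have : ψc x = C := by
            rw [hψc]; simp only
            rw [min_eq_left h', max_eq_right (by linarith)]
          rw [this, abs_of_nonneg (by linarith), abs_of_nonneg (by linarith)]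
          linarith
        · have : ψc x = g x := by
            rw [hψc]; simp only
            rw [min_eq_right h', max_eq_right h]
          rw [this]
    -- integrabilities
    have hsubm : AEStronglyMeasurable (fun x => ψc x - φ x) ρ :=
      (hψcont.aestronglyMeasurable).sub hφm.aestronglyMeasurable
    have habs : ∀ (m : Measure X) [IsFiniteMeasure m],
        Integrable (fun x => |ψc x - φ x|) m := by
      intro m _
      exact my_bdd_integrable
        ((hψcont.measurable.sub hφm).abs.aestronglyMeasurable)
        (B := 2 * C) (fun x => by
          rw [abs_abs]
          calc |ψc x - φ x| ≤ |ψc x| + |φ x| := abs_sub _ _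
            _ ≤ 2 * C := by linarith [hψb x, hC x])
    have hng : ∀ (m : Measure X) [IsFiniteMeasure m],
        Integrable (fun x => ‖φ x - g x‖) m := by
      intro m _
      exact my_bdd_integrable
        ((hφm.sub g.continuous.measurable).norm.aestronglyMeasurable)
        (B := C + ‖g‖) (fun x => by
          rw [Real.norm_eq_abs, abs_abs, abs_sub_comm]
          calc |g x - φ x| ≤ |g x| + |φ x| := abs_sub _ _
            _ ≤ C + ‖g‖ := by
              have := g.norm_coe_le_norm x
              rw [Real.norm_eq_abs] at this
              linarith [hC x])
    have hμabs : ∫ x, |ψc x - φ x| ∂μ ≤ δ := by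
      calc ∫ x, |ψc x - φ x| ∂μ ≤ ∫ x, ‖φ x - g x‖ ∂μ :=
            integral_mono (habs μ) (hng μ) hpt
        _ ≤ ∫ x, ‖φ x - g x‖ ∂ρ :=
            integral_mono_measure (Measure.le_add_right le_rfl)
              (ae_of_all _ fun x => norm_nonneg _) (hng ρ)
        _ ≤ δ := hg
    have hνabs : ∫ x, |ψc x - φ x| ∂ν ≤ δ := by
      calc ∫ x, |ψc x - φ x| ∂ν ≤ ∫ x, ‖φ x - g x‖ ∂ν :=
            integral_mono (habs ν) (hng ν) hpt
        _ ≤ ∫ x, ‖φ x - g x‖ ∂ρ :=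
            integral_mono_measure (Measure.le_add_left le_rfl)
              (ae_of_all _ fun x => norm_nonneg _) (hng ρ)
        _ ≤ δ := hg
    refine ⟨ψ, ?_⟩
    have hφμ : Integrable φ μ := my_bdd_integrable hφm.aestronglyMeasurable hC
    have hψμ : Integrable ψc μ := my_bdd_integrable hψcont.aestronglyMeasurable hψb
    have hexpφ : Integrable (fun x => Real.exp (φ x) - 1) ν :=
      my_bdd_integrable (((Real.continuous_exp.measurable.comp hφm).sub
        measurable_const).aestronglyMeasurable) (B := Real.exp C + 1) (fun x => by
          have hx := hC x; rw [abs_le] at hx ⊢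
          constructor
          · nlinarith [Real.exp_pos (φ x), Real.exp_pos C]
          · nlinarith [Real.exp_le_exp.mpr hx.2])
    have hexpψ : Integrable (fun x => Real.exp (ψc x) - 1) ν :=
      my_bdd_integrable (((Real.continuous_exp.comp hψcont).sub
        continuous_const).aestronglyMeasurable) (B := Real.exp C + 1) (fun x => by
          have hx := hψb x; rw [abs_le] at hx ⊢
          constructor
          · nlinarith [Real.exp_pos (ψc x), Real.exp_pos C]
          · nlinarith [Real.exp_le_exp.mpr hx.2])
    -- first piece
    have e1 : ∫ x, φ x ∂μ - ∫ x, ψc x ∂μ ≤ δ := by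
      rw [← integral_sub hφμ hψμ]
      calc ∫ x, (φ x - ψc x) ∂μ ≤ ∫ x, |ψc x - φ x| ∂μ :=
            integral_mono (hφμ.sub hψμ) (habs μ) (fun x => by
              rw [abs_sub_comm]; exact le_abs_self _)
        _ ≤ δ := hμabs
    -- second piece
    have e2 : ∫ x, (Real.exp (ψc x) - 1) ∂ν - ∫ x, (Real.exp (φ x) - 1) ∂ν
        ≤ Real.exp C * δ := by
      rw [← integral_sub hexpψ hexpφ]
      have : ∀ x, Real.exp (ψc x) - 1 - (Real.exp (φ x) - 1)
          ≤ Real.exp C * |ψc x - φ x| := by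
        intro x
        have := my_exp_lip (a := ψc x) (b := φ x) (abs_le.mp (hψb x)).2 (abs_le.mp (hC x)).2
        calc Real.exp (ψc x) - 1 - (Real.exp (φ x) - 1)
            = Real.exp (ψc x) - Real.exp (φ x) := by ring
          _ ≤ |Real.exp (ψc x) - Real.exp (φ x)| := le_abs_self _
          _ ≤ Real.exp C * |ψc x - φ x| := this
      calc ∫ x, (Real.exp (ψc x) - 1 - (Real.exp (φ x) - 1)) ∂ν
          ≤ ∫ x, Real.exp C * |ψc x - φ x| ∂ν :=
            integral_mono (hexpψ.sub hexpφ) ((habs ν).const_mul _) this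
        _ = Real.exp C * ∫ x, |ψc x - φ x| ∂ν := integral_const_mul _ _
        _ ≤ Real.exp C * δ := by
            exact mul_le_mul_of_nonneg_left hνabs (Real.exp_pos C).le
    have : A - ε ≤ (∫ x, ψc x ∂μ) - ∫ x, (Real.exp (ψc x) - 1) ∂ν := by
      have hεδ : δ + Real.exp C * δ = ε := by
        rw [hδ]; field_simp
      rw [hA]
      linarith
    exact this
  -- limit argument
  have seq : Filter.Tendsto (fun k : ℕ => ENNReal.ofReal (A - 1 / (k + 1)))
      Filter.atTop (nhds (ENNReal.ofReal A)) := by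
    apply ENNReal.tendsto_ofReal
    have h0 := tendsto_one_div_add_atTop_nhds_zero_nat (𝕜 := ℝ)
    have := Filter.Tendsto.sub (tendsto_const_nhds (x := A)) h0
    simpa using this
  refine le_of_tendsto seq (Filter.Eventually.of_forall fun k => ?_)
  obtain ⟨ψ, hψ⟩ := key (1 / (k + 1)) (by positivity)
  exact le_trans (ENNReal.ofReal_le_ofReal hψ)
    (le_iSup (fun ψ' : C(X, ℝ) =>
      ENNReal.ofReal ((∫ x, ψ' x ∂μ) - ∫ x, (Real.exp (ψ' x) - 1) ∂ν)) ψ)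

theorem stmt2 {X : Type*} [MetricSpace X] [CompactSpace X]
    [MeasurableSpace X] [BorelSpace X]
    (μ ν : Measure X) [IsFiniteMeasure μ] [IsFiniteMeasure ν] (hac : μ ≪ ν) :
    relEntropy μ ν
      = ⨆ φ : C(X, ℝ),
          ENNReal.ofReal ((∫ x, φ x ∂μ) - ∫ x, (Real.exp (φ x) - 1) ∂ν) := by
  set f : X → ℝ := fun x => (μ.rnDeriv ν x).toReal with hfdef
  have hfm : Measurable f := (Measure.measurable_rnDeriv μ ν).ennreal_toReal
  have hfnn : ∀ x, 0 ≤ f x := fun x => ENNReal.toReal_nonneg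
  have hfint : Integrable f ν := Measure.integrable_toReal_rnDeriv
  apply le_antisymm
  · -- Ent ≤ sup
    set φn : ℕ → X → ℝ := fun n x =>
      if f x = 0 then -(n : ℝ) else max (-(n : ℝ)) (min (n : ℝ) (Real.log (f x))) with hφndef
    set hseq : ℕ → X → ℝ := fun n x => f x * φn n x - (Real.exp (φn n x) - 1) with hhdef
    have hφnm : ∀ n, Measurable (φn n) := by
      intro n
      exact Measurable.ite (hfm (measurableSet_singleton 0)) measurable_const
        (measurable_const.max (measurable_const.min (Real.measurable_log.comp hfm)))
    have hφnb : ∀ n x, |φn n x| ≤ n := by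
      intro n x
      rw [hφndef]
      simp only
      split_ifs with hx
      · rw [abs_neg, abs_of_nonneg (Nat.cast_nonneg n)]
      · rw [abs_le]
        refine ⟨le_max_left _ _, max_le (neg_le_self (Nat.cast_nonneg n)) (min_le_left _ _)⟩
    have hhm : ∀ n, Measurable (hseq n) := fun n =>
      (hfm.mul (hφnm n)).sub ((Real.measurable_exp.comp (hφnm n)).sub measurable_const)
    have hmono : ∀ x, Monotone (fun n => hseq n x) := by
      intro x m n hmn
      simp only [hhdef, hφndef]
      by_cases hx : f x = 0
      · simp only [if_pos hx]
        exact my_F_le_F' (neg_le_neg (Nat.cast_le.mpr hmn))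
          (by rw [hx]; exact (Real.exp_pos _).le)
      · simp only [if_neg hx]
        have hfpos : 0 < f x := lt_of_le_of_ne (hfnn x) (Ne.symm hx)
        set c : ℝ := Real.log (f x) with hc
        rcases le_total 0 c with h0c | h0c
        · have e1 : ∀ k : ℕ, max (-(k : ℝ)) (min (k : ℝ) c) = min (k : ℝ) c := by
            intro k
            exact max_eq_right (le_trans (neg_nonpos.mpr (Nat.cast_nonneg k))
              (le_min (Nat.cast_nonneg k) h0c))
          rw [e1 m, e1 n]
          exact my_F_le_F (hfnn x)
            (min_le_min (Nat.cast_le.mpr hmn) le_rfl)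
            (by rw [← Real.exp_log hfpos]; exact Real.exp_le_exp.mpr (min_le_right _ _))
        · have e1 : ∀ k : ℕ, max (-(k : ℝ)) (min (k : ℝ) c) = max (-(k : ℝ)) c := by
            intro k
            rw [min_eq_right (le_trans h0c (Nat.cast_nonneg k))]
          rw [e1 m, e1 n]
          exact my_F_le_F' (max_le_max (neg_le_neg (Nat.cast_le.mpr hmn)) le_rfl)
            (by rw [← Real.exp_log hfpos]; exact Real.exp_le_exp.mpr (le_max_right _ _))
    have hzero : ∀ x, hseq 0 x = 0 := by
      intro x
      simp only [hhdef, hφndef, Nat.cast_zero, neg_zero]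
      by_cases hx : f x = 0
      · simp [hx]
      · rw [if_neg hx, max_eq_left (min_le_left _ _)]
        simp
    have hpos : ∀ n x, 0 ≤ hseq n x := by
      intro n x
      rw [← hzero x]
      exact hmono x (Nat.zero_le n)
    have htend : ∀ x, Filter.Tendsto (fun n => hseq n x) Filter.atTop
        (nhds (f x * Real.log (f x) - f x + 1)) := by
      intro x
      by_cases hx : f x = 0
      · have he : ∀ n : ℕ, hseq n x = 1 - Real.exp (-(n : ℝ)) := by
          intro n
          simp only [hhdef, hφndef]
          rw [if_pos hx, hx]
          ring
        have hexp : Filter.Tendsto (fun n : ℕ => Real.exp (-(n : ℝ)))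
            Filter.atTop (nhds 0) :=
          Real.tendsto_exp_atBot.comp
            (Filter.tendsto_neg_atBot_iff.mpr tendsto_natCast_atTop_atTop)
        have := (tendsto_const_nhds (x := (1:ℝ))).sub hexp
        rw [sub_zero] at this
        simp only [he, hx, Real.log_zero, mul_zero, zero_mul, zero_sub, sub_zero]
        convert this using 2
        ring
      · have hfpos : 0 < f x := lt_of_le_of_ne (hfnn x) (Ne.symm hx)
        set c : ℝ := Real.log (f x) with hc
        apply Filter.Tendsto.congr' _ tendsto_const_nhds
        rw [Filter.EventuallyEq, Filter.eventually_atTop]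
        refine ⟨⌈|c|⌉₊, fun n hn => ?_⟩
        have hcn : |c| ≤ (n : ℝ) := le_trans (Nat.le_ceil _) (Nat.cast_le.mpr hn)
        rw [abs_le] at hcn
        have e1 : φn n x = c := by
          rw [hφndef]
          simp only [if_neg hx]
          rw [min_eq_right hcn.2, max_eq_right hcn.1]
        simp only [hhdef, e1, hc, Real.exp_log hfpos]
        ring
    have hsup : ∀ x, (⨆ n, ENNReal.ofReal (hseq n x))
        = ENNReal.ofReal (f x * Real.log (f x) - f x + 1) := by
      intro x
      refine tendsto_nhds_unique
        (tendsto_atTop_iSup (fun m n h => ENNReal.ofReal_le_ofReal (hmono x h))) ?_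
      exact (ENNReal.continuous_ofReal.tendsto _).comp (htend x)
    have hent : relEntropy μ ν = ⨆ n, ∫⁻ x, ENNReal.ofReal (hseq n x) ∂ν := by
      rw [relEntropy]
      calc ∫⁻ x, ENNReal.ofReal ((μ.rnDeriv ν x).toReal * Real.log ((μ.rnDeriv ν x).toReal)
              - (μ.rnDeriv ν x).toReal + 1) ∂ν
          = ∫⁻ x, ⨆ n, ENNReal.ofReal (hseq n x) ∂ν :=
            lintegral_congr fun x => (hsup x).symm
        _ = ⨆ n, ∫⁻ x, ENNReal.ofReal (hseq n x) ∂ν :=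
            lintegral_iSup (fun n => ENNReal.measurable_ofReal.comp (hhm n))
              (fun m n h x => ENNReal.ofReal_le_ofReal (hmono x h))
    rw [hent]
    apply iSup_le
    intro n
    have hφint : Integrable (fun x => f x * φn n x) ν := by
      have := hfint.bdd_mul (hφnm n).aestronglyMeasurable
        (ae_of_all _ fun x => by simpa [Real.norm_eq_abs] using hφnb n x)
      simpa [mul_comm] using this
    have hexpint : Integrable (fun x => Real.exp (φn n x) - 1) ν :=
      my_bdd_integrable (((Real.measurable_exp.comp (hφnm n)).sub
        measurable_const).aestronglyMeasurable) (B := Real.exp n + 1) (fun x => by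
          have hx := abs_le.mp (hφnb n x)
          rw [abs_le]
          constructor
          · nlinarith [Real.exp_pos (φn n x), Real.exp_pos (n : ℝ)]
          · nlinarith [Real.exp_le_exp.mpr hx.2])
    have hint : Integrable (hseq n) ν := hφint.sub hexpint
    have e2 : ∫⁻ x, ENNReal.ofReal (hseq n x) ∂ν = ENNReal.ofReal (∫ x, hseq n x ∂ν) :=
      (ofReal_integral_eq_lintegral_ofReal hint (ae_of_all _ (hpos n))).symm
    have e3 : ∫ x, hseq n x ∂ν
        = (∫ x, φn n x ∂μ) - ∫ x, (Real.exp (φn n x) - 1) ∂ν := by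
      rw [hhdef]
      rw [integral_sub hφint hexpint]
      congr 1
      have := integral_rnDeriv_smul (μ := μ) (ν := ν) (f := φn n) hac
      simpa [hfdef, smul_eq_mul] using this
    rw [e2, e3]
    exact my_approx μ ν (φn n) (hφnm n) (Nat.cast_nonneg n) (hφnb n)
  · -- sup ≤ Ent
    apply iSup_le
    intro φ
    exact my_stepA μ ν hac φ φ.continuous
      (C := ‖BoundedContinuousFunction.mkOfCompact φ‖) (fun x => by
        simpa [Real.norm_eq_abs] using
          BoundedContinuousFunction.norm_coe_le_norm
            (BoundedContinuousFunction.mkOfCompact φ) x)
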